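/- Let x : [0,T) → ℝ^N solve x'(t) = -∑_{i=1}^g (m_i/⟨x(t), n_i⟩) n_i with m_i > 0, ⟨x(t), n_i⟩ < 0 for all i, t, and suppose the limit x(T) := lim_{t→T⁻} x(t) exists, with I = { i : ⟨x(T), n_i⟩ = 0 } nonempty and ⟨x(T), n_i⟩ < 0 for i ∉ I. Then lim_{t→T⁻} ‖x(t) - x(T)‖²/(T - t) = 2 ∑_{i∈I} m_i. -/

import Mathlib

open scoped RealInnerProductSpace

set_option maxHeartbeats 1000000 in
/-- If `x` solves the reduced MCF ODE in the chamber on `[0,T)`, converges to `xT` as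
`t → T⁻`, where `I = {i : ⟨xT, nᵢ⟩ = 0}` is nonempty and `⟨xT, nᵢ⟩ < 0` off `I`, then
`‖x t - xT‖²/(T - t) → 2 ∑_{i ∈ I} mᵢ`. -/
theorem stmt_5 {N g : ℕ} (T : ℝ) (hT : 0 < T)
    (nv : Fin g → EuclideanSpace ℝ (Fin N)) (m : Fin g → ℝ)
    (hm : ∀ i, 0 < m i)
    (x : ℝ → EuclideanSpace ℝ (Fin N))
    (hneg : ∀ t ∈ Set.Ico (0 : ℝ) T, ∀ i, ⟪x t, nv i⟫ < 0)
    (hode : ∀ t ∈ Set.Ico (0 : ℝ) T,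
      HasDerivAt x (-∑ i, (m i / ⟪x t, nv i⟫) • nv i) t)
    (xT : EuclideanSpace ℝ (Fin N))
    (hlim : Filter.Tendsto x (nhdsWithin T (Set.Iio T)) (nhds xT))
    (I : Finset (Fin g)) (hI : I.Nonempty)
    (hIwall : ∀ i, i ∈ I ↔ ⟪xT, nv i⟫ = 0)
    (hIoff : ∀ i ∉ I, ⟪xT, nv i⟫ < 0) :
    Filter.Tendsto (fun t => ‖x t - xT‖ ^ 2 / (T - t))
      (nhdsWithin T (Set.Iio T)) (nhds (2 * ∑ i ∈ I, m i)) := by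
  classical
  set l := nhdsWithin T (Set.Iio T) with hl
  set L : ℝ := 2 * ∑ i ∈ I, m i with hL
  set F : ℝ → ℝ := fun t => ‖x t - xT‖ ^ 2 with hF
  set φ : ℝ → ℝ := fun t => -2 * ∑ i, (m i / ⟪x t, nv i⟫) * ⟪x t - xT, nv i⟫ with hφ
  -- the derivative of F
  have hFder : ∀ t ∈ Set.Ico (0 : ℝ) T, HasDerivAt F (φ t) t := by
    intro t ht
    have hx : HasDerivAt (fun s => x s - xT)
        (-∑ i, (m i / ⟪x t, nv i⟫) • nv i) t := (hode t ht).sub_const xT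
    have h1 := hx.inner ℝ hx
    have hEq : (fun s => ⟪x s - xT, x s - xT⟫) = F := by
      funext s
      exact real_inner_self_eq_norm_sq _
    rw [hEq] at h1
    refine HasDerivAt.congr_deriv h1 ?_
    rw [inner_neg_left, inner_neg_right, sum_inner, inner_sum]
    simp only [real_inner_smul_left, real_inner_smul_right, hφ,
      real_inner_comm (x t - xT)]
    ring
  -- eventually in l, t ∈ Ioo 0 T
  have hmem : ∀ᶠ t in l, t ∈ Set.Ioo 0 T := by
    have h1 : ∀ᶠ t in l, t < T := eventually_mem_nhdsWithin
    have h2 : ∀ᶠ t in l, (0 : ℝ) < t :=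
      (eventually_gt_nhds hT).filter_mono nhdsWithin_le_nhds
    filter_upwards [h1, h2] with t h1 h2 using ⟨h2, h1⟩
  -- limit of inner products
  have hci : ∀ i, Continuous (fun y : EuclideanSpace ℝ (Fin N) => ⟪y, nv i⟫) :=
    fun i => continuous_id.inner continuous_const
  have hinner : ∀ i, Filter.Tendsto (fun t => ⟪x t, nv i⟫) l (nhds ⟪xT, nv i⟫) := by
    intro i
    exact ((hci i).tendsto xT).comp hlim
  have hinner' : ∀ i, Filter.Tendsto (fun t => ⟪x t - xT, nv i⟫) l (nhds 0) := by
    intro i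
    have := ((hci i).tendsto (xT - xT)).comp (hlim.sub_const xT)
    simpa [Function.comp_def] using this
  -- limit of φ
  have hφlim : Filter.Tendsto φ l (nhds (-L)) := by
    have hterm : ∀ i : Fin g, Filter.Tendsto
        (fun t => (m i / ⟪x t, nv i⟫) * ⟪x t - xT, nv i⟫) l
        (nhds (if i ∈ I then m i else 0)) := by
      intro i
      by_cases hi : i ∈ I
      · rw [if_pos hi]
        have hwall : ⟪xT, nv i⟫ = 0 := (hIwall i).mp hi
        apply Filter.Tendsto.congr' _ (tendsto_const_nhds (α := ℝ))
        filter_upwards [hmem] with t ht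
        have hne : ⟪x t, nv i⟫ ≠ 0 := (hneg t ⟨le_of_lt ht.1, ht.2⟩ i).ne
        rw [inner_sub_left, hwall, sub_zero, div_mul_cancel₀ _ hne]
      · rw [if_neg hi]
        have hne : ⟪xT, nv i⟫ ≠ 0 := (hIoff i hi).ne
        have := ((tendsto_const_nhds (x := m i)).div (hinner i) hne).mul (hinner' i)
        simpa using this
    have hsum := tendsto_finset_sum Finset.univ (fun i _ => hterm i)
    have := (tendsto_const_nhds (x := (-2 : ℝ))).mul hsum
    convert this using 2
    rw [hL]
    rw [Finset.sum_ite_mem, Finset.univ_inter]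
    ring
  -- F → 0
  have hF0 : Filter.Tendsto F l (nhds 0) := by
    have : Filter.Tendsto (fun y : EuclideanSpace ℝ (Fin N) => ‖y - xT‖ ^ 2)
        (nhds xT) (nhds (‖xT - xT‖ ^ 2)) :=
      (Continuous.tendsto (by continuity) xT)
    simpa [Function.comp_def] using this.comp hlim
  -- main estimate
  have hne : l.NeBot := nhdsLT_neBot T
  rw [Metric.tendsto_nhds]
  intro ε hε
  have hε2 : 0 < ε / 2 := by positivity
  have hφev : ∀ᶠ s in l, |φ s + L| ≤ ε / 2 := by
    have := Metric.tendsto_nhds.mp hφlim (ε / 2) hε2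
    filter_upwards [this] with s hs
    rw [Real.dist_eq, sub_neg_eq_add] at hs
    exact hs.le
  have hPev : ∀ᶠ s in l, s ∈ Set.Ioo 0 T ∧ |φ s + L| ≤ ε / 2 := hmem.and hφev
  rw [Filter.eventually_iff, hl, mem_nhdsLT_iff_exists_Ioo_subset] at hPev
  obtain ⟨a, ha, hU⟩ := hPev
  set U : Set ℝ := Set.Ioo a T with hUdef
  have haT : a < T := ha
  -- Lipschitz-type bound for h s = F s + L * s on U
  have hder : ∀ s ∈ U, HasDerivWithinAt (fun s => F s + L * s) (φ s + L) U s := by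
    intro s hs
    have hs' := (hU hs).1
    exact ((hFder s ⟨le_of_lt hs'.1, hs'.2⟩).add
      ((hasDerivAt_id s).const_mul L)).hasDerivWithinAt.congr_deriv (by ring)
  have hbound : ∀ s ∈ U, ‖φ s + L‖ ≤ ε / 2 := by
    intro s hs
    rw [Real.norm_eq_abs]
    exact (hU hs).2
  have hMVT : ∀ t ∈ U, ∀ s ∈ U,
      |(F s + L * s) - (F t + L * t)| ≤ ε / 2 * |s - t| := by
    intro t ht s hs
    have := (convex_Ioo a T).norm_image_sub_le_of_norm_hasDerivWithin_le hder hbound ht hs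
    simpa [Real.norm_eq_abs] using this
  -- pass to the limit s → T⁻
  have hkey : ∀ t ∈ U, |F t - L * (T - t)| ≤ ε / 2 * (T - t) := by
    intro t ht
    have hUev : ∀ᶠ s in l, s ∈ U := by
      rw [Filter.eventually_iff, hl, mem_nhdsLT_iff_exists_Ioo_subset]
      exact ⟨a, ha, fun s hs => hs⟩
    have htend : Filter.Tendsto
        (fun s => |(F s + L * s) - (F t + L * t)| - ε / 2 * |s - t|) l
        (nhds (|(0 + L * T) - (F t + L * t)| - ε / 2 * |T - t|)) := by
      have h1 : Filter.Tendsto (fun s : ℝ => s) l (nhds T) :=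
        Filter.tendsto_id.mono_left nhdsWithin_le_nhds
      exact (((hF0.add (h1.const_mul L)).sub_const (F t + L * t)).abs.sub
        (((h1.sub_const t).abs.const_mul (ε / 2))))
    have hle : ∀ᶠ s in l,
        |(F s + L * s) - (F t + L * t)| - ε / 2 * |s - t| ≤ 0 := by
      filter_upwards [hUev] with s hs
      linarith [hMVT t ht s hs]
    have := le_of_tendsto htend hle
    have htT : t < T := ht.2
    have habs : |T - t| = T - t := abs_of_pos (by linarith)
    rw [habs] at this
    have : |(0 + L * T) - (F t + L * t)| ≤ ε / 2 * (T - t) := by linarith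
    calc |F t - L * (T - t)| = |(0 + L * T) - (F t + L * t)| := by
          rw [abs_sub_comm]; ring_nf
      _ ≤ ε / 2 * (T - t) := this
  -- conclude
  have hUev : ∀ᶠ t in l, t ∈ U := by
    rw [Filter.eventually_iff, hl, mem_nhdsLT_iff_exists_Ioo_subset]
    exact ⟨a, ha, fun s hs => hs⟩
  filter_upwards [hUev] with t ht
  have htT : (0 : ℝ) < T - t := by linarith [ht.2]
  rw [Real.dist_eq]
  have h1 := hkey t ht
  have h2 : F t / (T - t) - L = (F t - L * (T - t)) / (T - t) := by
    rw [sub_div, mul_div_cancel_right₀ _ (ne_of_gt htT)]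
  calc |F t / (T - t) - L| = |F t - L * (T - t)| / (T - t) := by
        rw [h2, abs_div, abs_of_pos htT]
    _ ≤ ε / 2 := by rw [div_le_iff₀ htT]; linarith [h1]
    _ < ε := by linarith
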